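/- arXiv:1504.06999 — 3 statements merged into one kernel-verified Lean document; each statement's English description precedes it below -/
import Mathlib

section
/- Let (Y_n) be a sequence of real random variables adapted to a filtration (F_n). If ∑_{j≥1} j^{-2} E[Y_j²] < ∞ and E[Y_j | F_{j-1}] converges almost surely to a random variable Y, then the Cesàro means (1/n) ∑_{j=1}^n Y_j converge almost surely to Y. -/
open MeasureTheory ProbabilityTheory Filter
open scoped Topology

section Aux

open Finset

private lemma kron_id (u : ℕ → ℝ) (n : ℕ) :
    ∑ j ∈ range n, u j = (n : ℝ) * (∑ j ∈ range n, ((j : ℝ) + 1)⁻¹ * u j)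
      - ∑ k ∈ range n, (∑ j ∈ range k, ((j : ℝ) + 1)⁻¹ * u j) := by
  induction n with
  | zero => simp
  | succ n ih =>
    rw [sum_range_succ, ih, sum_range_succ (fun k => ∑ j ∈ range k, ((j:ℝ)+1)⁻¹ * u j),
      sum_range_succ (fun j => ((j:ℝ)+1)⁻¹ * u j)]
    have h : ((n : ℝ) + 1) ≠ 0 := by positivity
    push_cast
    field_simp
    ring

private lemma kronecker {u : ℕ → ℝ} {l : ℝ}
    (h : Tendsto (fun n : ℕ => ∑ j ∈ range n, ((j : ℝ) + 1)⁻¹ * u j) atTop (𝓝 l)) :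
    Tendsto (fun n : ℕ => (n : ℝ)⁻¹ * ∑ j ∈ range n, u j) atTop (𝓝 0) := by
  have hc := h.cesaro
  have hsub : Tendsto (fun n : ℕ =>
      (∑ j ∈ range n, ((j : ℝ) + 1)⁻¹ * u j)
        - (n : ℝ)⁻¹ * ∑ k ∈ range n, (∑ j ∈ range k, ((j : ℝ) + 1)⁻¹ * u j))
      atTop (𝓝 (l - l)) := h.sub hc
  rw [sub_self] at hsub
  refine hsub.congr' ?_
  filter_upwards [eventually_ge_atTop 1] with n hn
  have hn' : (n : ℝ) ≠ 0 := by positivity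
  rw [kron_id u n, mul_sub, ← mul_assoc, inv_mul_cancel₀ hn', one_mul]

variable {Ω : Type*} {m m0 : MeasurableSpace Ω} {μ : Measure Ω} [IsFiniteMeasure μ]

private lemma integrable_mul_two {f g : Ω → ℝ} (hf : MemLp f 2 μ) (hg : MemLp g 2 μ) :
    Integrable (f * g) μ := by
  have : MemLp (f • g) 1 μ := by
    haveI : ENNReal.HolderTriple 2 2 1 := ⟨by rw [ENNReal.inv_two_add_inv_two, inv_one]⟩
    exact hg.smul hf
  exact memLp_one_iff_integrable.mp this

/-- If `μ[g|m] = 0` a.e. and `φ` is `m`-measurable, both in L², then `∫ φ * g = 0`. -/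
private lemma integral_mul_eq_zero (hm : m ≤ m0) {φ g : Ω → ℝ}
    (hφm : StronglyMeasurable[m] φ) (hφ : MemLp φ 2 μ) (hg : MemLp g 2 μ)
    (hg0 : μ[g|m] =ᵐ[μ] 0) : ∫ ω, φ ω * g ω ∂μ = 0 := by
  have hmul : Integrable (φ * g) μ := integrable_mul_two hφ hg
  have h1 : μ[φ * g|m] =ᵐ[μ] φ * μ[g|m] :=
    condExp_mul_of_stronglyMeasurable_left hφm hmul (hg.integrable one_le_two)
  have h2 : μ[φ * g|m] =ᵐ[μ] 0 := by
    filter_upwards [h1, hg0] with ω h1 h2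
    simp [h1, h2]
  calc ∫ ω, φ ω * g ω ∂μ = ∫ ω, (μ[φ * g|m]) ω ∂μ := (integral_condExp hm).symm
    _ = 0 := by rw [integral_congr_ae h2]; simp

private lemma memℒp_two_condexp (hm : m ≤ m0) {f : Ω → ℝ} (hf : MemLp f 2 μ) :
    MemLp (μ[f|m]) 2 μ := by
  set F : Lp ℝ 2 μ := hf.toLp f with hF
  have hfF : f =ᵐ[μ] F := (MemLp.coeFn_toLp hf).symm
  have heq : (fun x => (condExpL2 ℝ ℝ hm F : Ω → ℝ) x) =ᵐ[μ] μ[f|m] := by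
    refine ae_eq_condExp_of_forall_setIntegral_eq hm (hf.integrable one_le_two) ?_ ?_ ?_
    · intro s hs hμs
      exact integrableOn_condExpL2_of_measure_ne_top hm hμs.ne F
    · intro s hs hμs
      rw [integral_condExpL2_eq hm F hs hμs.ne]
      exact setIntegral_congr_ae (hm s hs) (hfF.mono fun x hx _ => hx.symm)
    · exact aestronglyMeasurable_condExpL2 hm F
  exact (Lp.memLp ((condExpL2 ℝ ℝ hm F : _) : Lp ℝ 2 μ)).ae_eq heq

/-- variance bound: `∫ (f - μ[f|m])² ≤ ∫ f²`. -/
private lemma integral_sq_sub_condexp_le (hm : m ≤ m0) {f : Ω → ℝ} (hf : MemLp f 2 μ) :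
    ∫ ω, (f ω - (μ[f|m]) ω) ^ 2 ∂μ ≤ ∫ ω, f ω ^ 2 ∂μ := by
  set C := μ[f|m] with hC
  have hCm : MemLp C 2 μ := memℒp_two_condexp hm hf
  have hf2 : Integrable (fun ω => f ω ^ 2) μ := hf.integrable_sq
  have hC2 : Integrable (fun ω => C ω ^ 2) μ := hCm.integrable_sq
  have hfC : Integrable (C * f) μ := integrable_mul_two hCm hf
  have key : ∫ ω, C ω * f ω ∂μ = ∫ ω, C ω ^ 2 ∂μ := by
    have h1 : μ[C * f|m] =ᵐ[μ] C * μ[f|m] :=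
      condExp_mul_of_stronglyMeasurable_left stronglyMeasurable_condExp hfC (hf.integrable one_le_two)
    calc ∫ ω, C ω * f ω ∂μ = ∫ ω, (μ[C * f|m]) ω ∂μ := (integral_condExp hm).symm
      _ = ∫ ω, (C ω) * (C ω) ∂μ := integral_congr_ae h1
      _ = ∫ ω, C ω ^ 2 ∂μ := by simp_rw [sq]
  have expand : ∫ ω, (f ω - C ω) ^ 2 ∂μ
      = ∫ ω, f ω ^ 2 ∂μ - 2 * ∫ ω, C ω * f ω ∂μ + ∫ ω, C ω ^ 2 ∂μ := by
    have : ∀ ω, (f ω - C ω) ^ 2 = f ω ^ 2 - 2 * (C ω * f ω) + C ω ^ 2 := by intro ω; ring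
    simp_rw [this]
    have hfC2 : Integrable (fun ω => 2 * (C ω * f ω)) μ := by
      simpa [Pi.mul_apply] using hfC.const_mul 2
    have A : Integrable (fun ω => f ω ^ 2 - 2 * (C ω * f ω)) μ := hf2.sub hfC2
    rw [integral_add A hC2, integral_sub hf2 hfC2, integral_const_mul]
  rw [expand, key]
  have : 0 ≤ ∫ ω, C ω ^ 2 ∂μ := integral_nonneg fun ω => sq_nonneg _
  linarith

end Aux

/-- Lemma 2 in BCPR. Let `(Y n)` be a sequence of real random
variables adapted to a filtration `(ℱ n)`. If `∑_{j≥1} j⁻² E[Y j ^ 2] < ∞` and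
`E[Y j | ℱ (j-1)]` converges almost surely to a random variable `Y`, then the
Cesàro means `(1/n) ∑_{j=1}^n Y j` converge almost surely to `Y`. -/
theorem stmt1
    {Ω : Type*} {m0 : MeasurableSpace Ω} {μ : Measure Ω} [IsProbabilityMeasure μ]
    (ℱ : Filtration ℕ m0) (Y : ℕ → Ω → ℝ) (Ylim : Ω → ℝ)
    (hadp : ∀ j, StronglyMeasurable[ℱ j] (Y j))
    (hint : ∀ j, MemLp (Y j) 2 μ)
    (hsum : Summable (fun j : ℕ => (↑(j + 1) : ℝ)⁻¹ ^ 2 * ∫ ω, (Y (j + 1) ω) ^ 2 ∂μ))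
    (hconv : ∀ᵐ ω ∂μ, Tendsto (fun j : ℕ => (μ[Y (j + 1)|ℱ j]) ω) atTop (𝓝 (Ylim ω))) :
    ∀ᵐ ω ∂μ, Tendsto
      (fun n : ℕ => (n : ℝ)⁻¹ * ∑ j ∈ Finset.Icc 1 n, Y j ω)
      atTop (𝓝 (Ylim ω)) := by
  classical
  set C : ℕ → Ω → ℝ := fun j => μ[Y (j + 1)|ℱ j] with hCdef
  set Z : ℕ → Ω → ℝ := fun j ω => Y (j + 1) ω - C j ω with hZdef
  set g : ℕ → Ω → ℝ := fun j ω => ((j : ℝ) + 1)⁻¹ * Z j ω with hgdef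
  set f : ℕ → Ω → ℝ := fun n ω => ∑ j ∈ Finset.range n, g j ω with hfdef
  have hC2 : ∀ j, MemLp (C j) 2 μ := fun j => memℒp_two_condexp (ℱ.le j) (hint (j + 1))
  have hZ2 : ∀ j, MemLp (Z j) 2 μ := fun j => (hint (j + 1)).sub (hC2 j)
  have hg2 : ∀ j, MemLp (g j) 2 μ := fun j => (hZ2 j).const_mul _
  have hf2 : ∀ n, MemLp (f n) 2 μ := by
    intro n
    have h := memLp_finsetSum' (μ := μ) (Finset.range n) (fun j (_ : j ∈ Finset.range n) => hg2 j)
    have he : (∑ i ∈ Finset.range n, g i) = f n := by funext ω; simp [hfdef]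
    rwa [he] at h
  -- zero conditional expectation of g j
  have hZ0 : ∀ j, μ[Z j|ℱ j] =ᵐ[μ] 0 := by
    intro j
    have h1 : μ[Z j|ℱ j] =ᵐ[μ] μ[Y (j + 1)|ℱ j] - μ[C j|ℱ j] :=
      condExp_sub ((hint (j + 1)).integrable one_le_two) integrable_condExp _
    have h2 : μ[C j|ℱ j] = C j :=
      condExp_of_stronglyMeasurable (ℱ.le j) stronglyMeasurable_condExp integrable_condExp
    filter_upwards [h1] with ω hω
    rw [hω, Pi.sub_apply, h2]; simp [hCdef]
  have hg0 : ∀ j, μ[g j|ℱ j] =ᵐ[μ] 0 := by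
    intro j
    have h1 : g j = ((j : ℝ) + 1)⁻¹ • Z j := by
      funext ω; simp [hgdef, smul_eq_mul]
    have h2 : μ[g j|ℱ j] =ᵐ[μ] ((j : ℝ) + 1)⁻¹ • μ[Z j|ℱ j] := by
      rw [h1]; exact condExp_smul _ _ _
    filter_upwards [h2, hZ0 j] with ω hω h0
    simp [hω, Pi.smul_apply, h0]
  -- adaptedness
  have hgadp : ∀ j, StronglyMeasurable[ℱ (j + 1)] (g j) := by
    intro j
    exact (((hadp (j + 1)).sub
      (stronglyMeasurable_condExp.mono (ℱ.mono (Nat.le_succ j)))).const_mul _)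
  have hfadp : ∀ n, StronglyMeasurable[ℱ n] (f n) := by
    intro n
    have h := Finset.stronglyMeasurable_sum (Finset.range n)
        (fun j hj => (hgadp j).mono (ℱ.mono (Finset.mem_range.mp hj)))
    have he : (∑ i ∈ Finset.range n, g i) = f n := by funext ω; simp [hfdef]
    rwa [he] at h
  have hfint : ∀ n, Integrable (f n) μ := fun n => (hf2 n).integrable one_le_two
  -- f is a martingale
  have hmart : Martingale f ℱ μ := by
    refine martingale_nat hfadp hfint (fun i => ?_)
    have hstep : f (i + 1) = f i + g i := by
      funext ω; simp [hfdef, Finset.sum_range_succ]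
    have h1 : μ[f (i + 1)|ℱ i] =ᵐ[μ] μ[f i|ℱ i] + μ[g i|ℱ i] := by
      rw [hstep]; exact condExp_add (hfint i) ((hg2 i).integrable one_le_two) _
    have h2 : μ[f i|ℱ i] = f i :=
      condExp_of_stronglyMeasurable (ℱ.le i) (hfadp i) (hfint i)
    filter_upwards [h1, hg0 i] with ω hω h0
    simp [hω, h2, h0]
  -- L² bound by induction
  set B : ℝ := ∑' j : ℕ, (↑(j + 1) : ℝ)⁻¹ ^ 2 * ∫ ω, (Y (j + 1) ω) ^ 2 ∂μ with hBdef
  have hterm_nonneg : ∀ j : ℕ, 0 ≤ (↑(j + 1) : ℝ)⁻¹ ^ 2 * ∫ ω, (Y (j + 1) ω) ^ 2 ∂μ := by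
    intro j
    have : (0:ℝ) ≤ ∫ ω, (Y (j + 1) ω) ^ 2 ∂μ := integral_nonneg fun ω => sq_nonneg _
    positivity
  have hI : ∀ n, ∫ ω, (f n ω) ^ 2 ∂μ
      ≤ ∑ j ∈ Finset.range n, (↑(j + 1) : ℝ)⁻¹ ^ 2 * ∫ ω, (Y (j + 1) ω) ^ 2 ∂μ := by
    intro n
    induction n with
    | zero => simp [hfdef]
    | succ n ih =>
      have hstep : ∀ ω, f (n + 1) ω = f n ω + g n ω := by
        intro ω; simp [hfdef, Finset.sum_range_succ]
      have hcross : ∫ ω, f n ω * g n ω ∂μ = 0 :=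
        integral_mul_eq_zero (ℱ.le n) (hfadp n) (hf2 n) (hg2 n) (hg0 n)
      have hfsq : Integrable (fun ω => f n ω ^ 2) μ := (hf2 n).integrable_sq
      have hgsq : Integrable (fun ω => g n ω ^ 2) μ := (hg2 n).integrable_sq
      have hfg : Integrable (fun ω => 2 * (f n ω * g n ω)) μ := by
        simpa [Pi.mul_apply] using (integrable_mul_two (hf2 n) (hg2 n)).const_mul 2
      have hexp : ∫ ω, (f (n + 1) ω) ^ 2 ∂μ
          = ∫ ω, f n ω ^ 2 ∂μ + 2 * ∫ ω, f n ω * g n ω ∂μ + ∫ ω, g n ω ^ 2 ∂μ := by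
        have hpt : ∀ ω, (f (n + 1) ω) ^ 2
            = f n ω ^ 2 + 2 * (f n ω * g n ω) + g n ω ^ 2 := by
          intro ω; rw [hstep ω]; ring
        simp_rw [hpt]
        have A : Integrable (fun ω => f n ω ^ 2 + 2 * (f n ω * g n ω)) μ := hfsq.add hfg
        rw [integral_add A hgsq, integral_add hfsq hfg, integral_const_mul]
      have hgbound : ∫ ω, g n ω ^ 2 ∂μ
          ≤ (↑(n + 1) : ℝ)⁻¹ ^ 2 * ∫ ω, (Y (n + 1) ω) ^ 2 ∂μ := by
        have hpt : ∀ ω, g n ω ^ 2 = ((n : ℝ) + 1)⁻¹ ^ 2 * (Z n ω) ^ 2 := by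
          intro ω; simp [hgdef, mul_pow]
        simp_rw [hpt]
        rw [integral_const_mul]
        have hvar : ∫ ω, (Z n ω) ^ 2 ∂μ ≤ ∫ ω, (Y (n + 1) ω) ^ 2 ∂μ :=
          integral_sq_sub_condexp_le (ℱ.le n) (hint (n + 1))
        have hcast : ((n : ℝ) + 1)⁻¹ ^ 2 = (↑(n + 1) : ℝ)⁻¹ ^ 2 := by push_cast; ring
        rw [hcast]
        have : (0:ℝ) ≤ (↑(n + 1) : ℝ)⁻¹ ^ 2 := by positivity
        exact mul_le_mul_of_nonneg_left hvar this
      rw [Finset.sum_range_succ]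
      rw [hexp, hcross]
      linarith
  have hIB : ∀ n, ∫ ω, (f n ω) ^ 2 ∂μ ≤ B := by
    intro n
    exact (hI n).trans (Summable.sum_le_tsum (Finset.range n) (fun j _ => hterm_nonneg j) hsum)
  -- L¹ bound
  have hbdd : ∀ n, eLpNorm (f n) 1 μ ≤ ENNReal.ofReal (1 + B) := by
    intro n
    have habs : ∫ ω, ‖f n ω‖ ∂μ ≤ 1 + B := by
      have hpt : ∀ ω, ‖f n ω‖ ≤ 1 + (f n ω) ^ 2 := by
        intro ω
        rw [Real.norm_eq_abs]
        nlinarith [sq_nonneg (|f n ω| - 1), abs_nonneg (f n ω), sq_abs (f n ω)]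
      have hmono : ∫ ω, ‖f n ω‖ ∂μ ≤ ∫ ω, 1 + (f n ω) ^ 2 ∂μ :=
        integral_mono (hfint n).norm ((integrable_const 1).add (hf2 n).integrable_sq) hpt
      have : ∫ ω, (1 : ℝ) + (f n ω) ^ 2 ∂μ = 1 + ∫ ω, (f n ω) ^ 2 ∂μ := by
        rw [integral_add (integrable_const 1) (hf2 n).integrable_sq]
        simp [measure_univ]
      rw [this] at hmono
      linarith [hIB n]
    calc eLpNorm (f n) 1 μ = ENNReal.ofReal (∫ ω, ‖f n ω‖ ∂μ) := by
          rw [eLpNorm_one_eq_lintegral_enorm,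
            ← ofReal_integral_norm_eq_lintegral_enorm (hfint n)]
      _ ≤ ENNReal.ofReal (1 + B) := ENNReal.ofReal_le_ofReal habs
  -- a.s. convergence of martingale
  have hconvf : ∀ᵐ ω ∂μ, ∃ c, Tendsto (fun n => f n ω) atTop (𝓝 c) :=
    hmart.submartingale.exists_ae_tendsto_of_bdd hbdd
  -- conclusion
  filter_upwards [hconvf, hconv] with ω hfc hCc
  obtain ⟨c, hc⟩ := hfc
  have hk : Tendsto (fun n : ℕ => (n : ℝ)⁻¹ * ∑ j ∈ Finset.range n, Z j ω) atTop (𝓝 0) := by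
    apply kronecker (l := c)
    exact hc.congr (fun n => rfl)
  have hcez : Tendsto (fun n : ℕ => (n : ℝ)⁻¹ * ∑ j ∈ Finset.range n, C j ω)
      atTop (𝓝 (Ylim ω)) := hCc.cesaro
  have hadd := hk.add hcez
  rw [zero_add] at hadd
  have heq : ∀ n : ℕ, (n : ℝ)⁻¹ * ∑ j ∈ Finset.range n, Z j ω
      + (n : ℝ)⁻¹ * ∑ j ∈ Finset.range n, C j ω
      = (n : ℝ)⁻¹ * ∑ j ∈ Finset.Icc 1 n, Y j ω := by
    intro n
    rw [← mul_add, ← Finset.sum_add_distrib]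
    congr 1
    have h1 : ∀ j, Z j ω + C j ω = Y (j + 1) ω := by intro j; simp [hZdef]
    simp_rw [h1]
    rw [show Finset.Icc 1 n = Finset.Ico 1 (n + 1) by rfl, Finset.sum_Ico_eq_sum_range]
    simp [add_comm]
  exact hadd.congr heq
end

section
/- Let F = (F_n) be a filtration with F_∞ = ⋁_n F_n. For each sequence (Y_n) of integrable complex random variables that is dominated in L¹ (i.e. |Y_n| ≤ W for all n for some integrable W) and converges almost surely to a random variable Y, the conditional expectations E[Y_n | F_n] converge almost surely to E[Y | F_∞]. -/
open MeasureTheory ProbabilityTheory Filter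
open scoped Topology

open scoped ENNReal

lemma condexp_clm_comm {Ω : Type*} {m m0 : MeasurableSpace Ω} {μ : Measure Ω}
    (hm : m ≤ m0) [SigmaFinite (μ.trim hm)] (T : ℂ →L[ℝ] ℝ) {f : Ω → ℂ}
    (hf : Integrable f μ) :
    (fun ω => T ((μ[f|m]) ω)) =ᵐ[μ] μ[fun ω => T (f ω)|m] := by
  refine ae_eq_condExp_of_forall_setIntegral_eq hm (T.integrable_comp hf)
    (fun s _ _ => (T.integrable_comp integrable_condExp).integrableOn)
    (fun s hs hμs => ?_)
    ((T.continuous.comp_stronglyMeasurable stronglyMeasurable_condExp).aestronglyMeasurable)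
  rw [T.integral_comp_comm integrable_condExp.integrableOn,
    T.integral_comp_comm hf.integrableOn, setIntegral_condExp hm hf hs]

lemma norm_condexp_le_two {Ω : Type*} {m m0 : MeasurableSpace Ω} {μ : Measure Ω}
    (hm : m ≤ m0) [SigmaFinite (μ.trim hm)] {f : Ω → ℂ}
    (hf : Integrable f μ) :
    ∀ᵐ ω ∂μ, ‖(μ[f|m]) ω‖ ≤ 2 * (μ[fun ω => ‖f ω‖|m]) ω := by
  have hre := condexp_clm_comm hm Complex.reCLM hf
  have him := condexp_clm_comm hm Complex.imCLM hf
  have hfre : Integrable (fun ω => (f ω).re) μ := Complex.reCLM.integrable_comp hf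
  have hfim : Integrable (fun ω => (f ω).im) μ := Complex.imCLM.integrable_comp hf
  have h1 : μ[fun ω => (f ω).re|m] ≤ᵐ[μ] μ[fun ω => ‖f ω‖|m] :=
    condExp_mono hfre hf.norm (Eventually.of_forall fun ω => Complex.re_le_norm _)
  have h1' : μ[fun ω => -(f ω).re|m] ≤ᵐ[μ] μ[fun ω => ‖f ω‖|m] :=
    condExp_mono hfre.neg hf.norm (Eventually.of_forall fun ω =>
      (neg_le_abs _).trans (Complex.abs_re_le_norm _))
  have h2 : μ[fun ω => (f ω).im|m] ≤ᵐ[μ] μ[fun ω => ‖f ω‖|m] :=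
    condExp_mono hfim hf.norm (Eventually.of_forall fun ω =>
      (le_abs_self _).trans (Complex.abs_im_le_norm _))
  have h2' : μ[fun ω => -(f ω).im|m] ≤ᵐ[μ] μ[fun ω => ‖f ω‖|m] :=
    condExp_mono hfim.neg hf.norm (Eventually.of_forall fun ω =>
      (neg_le_abs _).trans (Complex.abs_im_le_norm _))
  have hnegre : μ[fun ω => -(f ω).re|m] =ᵐ[μ] -(μ[fun ω => (f ω).re|m]) :=
    condExp_neg (fun ω => (f ω).re) m
  have hnegim : μ[fun ω => -(f ω).im|m] =ᵐ[μ] -(μ[fun ω => (f ω).im|m]) :=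
    condExp_neg (fun ω => (f ω).im) m
  simp only [Complex.reCLM_apply, Complex.imCLM_apply] at hre him
  filter_upwards [hre, him, h1, h1', h2, h2', hnegre, hnegim] with ω
    hre him h1 h1' h2 h2' hnegre hnegim
  simp only [Pi.neg_apply] at hnegre hnegim
  have hRe : |((μ[f|m]) ω).re| ≤ (μ[fun ω => ‖f ω‖|m]) ω :=
    abs_le.2 ⟨by linarith, by linarith⟩
  have hIm : |((μ[f|m]) ω).im| ≤ (μ[fun ω => ‖f ω‖|m]) ω :=
    abs_le.2 ⟨by linarith, by linarith⟩
  calc ‖(μ[f|m]) ω‖ ≤ |((μ[f|m]) ω).re| + |((μ[f|m]) ω).im| :=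
        Complex.norm_le_abs_re_add_abs_im _
    _ ≤ 2 * (μ[fun ω => ‖f ω‖|m]) ω := by linarith

lemma condexp_re_comm {Ω : Type*} {m m0 : MeasurableSpace Ω} {μ : Measure Ω}
    (hm : m ≤ m0) [SigmaFinite (μ.trim hm)] {f : Ω → ℂ} (hf : Integrable f μ) :
    (fun ω => ((μ[f|m]) ω).re) =ᵐ[μ] μ[fun ω => (f ω).re|m] := by
  simpa only [Complex.reCLM_apply] using condexp_clm_comm hm Complex.reCLM hf

lemma condexp_im_comm {Ω : Type*} {m m0 : MeasurableSpace Ω} {μ : Measure Ω}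
    (hm : m ≤ m0) [SigmaFinite (μ.trim hm)] {f : Ω → ℂ} (hf : Integrable f μ) :
    (fun ω => ((μ[f|m]) ω).im) =ᵐ[μ] μ[fun ω => (f ω).im|m] := by
  simpa only [Complex.imCLM_apply] using condexp_clm_comm hm Complex.imCLM hf


/-- Blackwell–Dubins / Lemma A.2 in Crimaldi. Let `ℱ` be a
filtration with `ℱ∞ = ⨆ n, ℱ n`. For each sequence `(Y n)` of integrable complex
random variables which is dominated in `L¹` and converges almost surely to `Y`,
the conditional expectations `E[Y n | ℱ n]` converge a.s. to `E[Y | ℱ∞]`. -/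
theorem stmt2
    {Ω : Type*} {m0 : MeasurableSpace Ω} {μ : Measure Ω} [IsProbabilityMeasure μ]
    (ℱ : Filtration ℕ m0) (Y : ℕ → Ω → ℂ) (Ylim : Ω → ℂ) (W : Ω → ℝ)
    (hint : ∀ n, Integrable (Y n) μ)
    (hW : Integrable W μ)
    (hdom : ∀ n, ∀ᵐ ω ∂μ, ‖Y n ω‖ ≤ W ω)
    (hconv : ∀ᵐ ω ∂μ, Tendsto (fun n => Y n ω) atTop (𝓝 (Ylim ω))) :
    ∀ᵐ ω ∂μ, Tendsto (fun n => (μ[Y n|ℱ n]) ω) atTop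
      (𝓝 ((μ[Ylim|(⨆ n, ℱ n : MeasurableSpace Ω)]) ω)) := by
  have hm : (⨆ n, ℱ n : MeasurableSpace Ω) ≤ m0 := iSup_le fun n => ℱ.le n
  haveI : SigmaFinite (μ.trim hm) := sigmaFiniteTrim_mono _ le_rfl
  -- measurability and integrability of Ylim
  have hYm : AEStronglyMeasurable Ylim μ :=
    aestronglyMeasurable_of_tendsto_ae atTop (fun n => (hint n).aestronglyMeasurable) hconv
  have hYlim_bd : ∀ᵐ ω ∂μ, ‖Ylim ω‖ ≤ W ω := by
    filter_upwards [hconv, ae_all_iff.2 hdom] with ω h1 h2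
    exact le_of_tendsto h1.norm (Eventually.of_forall h2)
  have hYlimInt : Integrable Ylim μ := hW.mono' hYm hYlim_bd
  -- the dominating sequence g
  set g : ℕ → Ω → ℝ :=
    fun N ω => (⨆ k, (‖Y (N + k) ω - Ylim ω‖₊ : ℝ≥0∞)).toReal with hg_def
  have hgm : ∀ N, AEStronglyMeasurable (g N) μ := by
    intro N
    refine (ENNReal.measurable_toReal.comp_aemeasurable ?_).aestronglyMeasurable
    exact AEMeasurable.iSup fun k => ((hint (N + k)).sub hYlimInt).aestronglyMeasurable.enorm
  -- master pointwise facts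
  have hmaster : ∀ᵐ ω ∂μ, (∀ N k, ‖Y (N + k) ω - Ylim ω‖ ≤ g N ω) ∧
      (∀ N, g N ω ≤ 2 * W ω) ∧ Tendsto (fun N => g N ω) atTop (𝓝 0) := by
    filter_upwards [ae_all_iff.2 hdom, hYlim_bd, hconv] with ω hdω hlω hcω
    have hb : ∀ n, ‖Y n ω - Ylim ω‖ ≤ 2 * W ω := fun n =>
      (norm_sub_le _ _).trans (by linarith [hdω n, hlω])
    have hW0 : 0 ≤ 2 * W ω := le_trans (norm_nonneg _) (hb 0)
    have hSle : ∀ N, (⨆ k, (‖Y (N + k) ω - Ylim ω‖₊ : ℝ≥0∞)) ≤ ENNReal.ofReal (2 * W ω) :=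
      fun N => iSup_le fun k => by
        rw [← enorm_eq_nnnorm, ← ofReal_norm]; exact ENNReal.ofReal_le_ofReal (hb _)
    have hSne : ∀ N, (⨆ k, (‖Y (N + k) ω - Ylim ω‖₊ : ℝ≥0∞)) ≠ ⊤ :=
      fun N => ((hSle N).trans_lt ENNReal.ofReal_lt_top).ne
    refine ⟨fun N k => ?_, fun N => ENNReal.toReal_le_of_le_ofReal hW0 (hSle N), ?_⟩
    · have h := ENNReal.toReal_mono (hSne N)
        (le_iSup (fun k => (‖Y (N + k) ω - Ylim ω‖₊ : ℝ≥0∞)) k)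
      simpa [hg_def] using h
    · rw [Metric.tendsto_atTop]
      intro δ hδ
      obtain ⟨M, hM⟩ := (Metric.tendsto_atTop.1 hcω) (δ / 2) (by linarith)
      refine ⟨M, fun N hN => ?_⟩
      have hSN : (⨆ k, (‖Y (N + k) ω - Ylim ω‖₊ : ℝ≥0∞)) ≤ ENNReal.ofReal (δ / 2) := by
        refine iSup_le fun k => ?_
        rw [← enorm_eq_nnnorm, ← ofReal_norm]
        refine ENNReal.ofReal_le_ofReal (le_of_lt ?_)
        rw [← dist_eq_norm]
        exact hM (N + k) (hN.trans (Nat.le_add_right _ _))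
      have : g N ω ≤ δ / 2 := ENNReal.toReal_le_of_le_ofReal (by linarith) hSN
      have hnn : 0 ≤ g N ω := ENNReal.toReal_nonneg
      rw [Real.dist_eq]
      rw [abs_of_nonneg (by simpa using hnn)]
      simp only [sub_zero]
      linarith
  -- integrability of g N
  have hgint : ∀ N, Integrable (g N) μ := by
    intro N
    refine (hW.const_mul 2).mono' (hgm N) ?_
    filter_upwards [hmaster] with ω hω
    rw [Real.norm_eq_abs, abs_of_nonneg ENNReal.toReal_nonneg]
    exact hω.2.1 N
  -- integrals of g N tend to 0
  have hI : Tendsto (fun N => ∫ ω, g N ω ∂μ) atTop (𝓝 0) := by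
    have := tendsto_integral_of_dominated_convergence (fun ω => 2 * W ω) hgm
      (hW.const_mul 2)
      (fun N => by
        filter_upwards [hmaster] with ω hω
        rw [Real.norm_eq_abs, abs_of_nonneg ENNReal.toReal_nonneg]
        exact hω.2.1 N)
      (by filter_upwards [hmaster] with ω hω using hω.2.2)
    simpa using this
  -- Markov argument: a.e., for every k there is N with E[g N | ⨆] < 1/(k+1)
  have hA0 : ∀ᵐ ω ∂μ, ∀ k : ℕ,
      ∃ N, (μ[g N|(⨆ n, ℱ n : MeasurableSpace Ω)]) ω < 1 / ((k : ℝ) + 1) := by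
    rw [ae_all_iff]
    intro k
    set ε : ℝ := 1 / ((k : ℝ) + 1) with hε_def
    have hε : 0 < ε := by positivity
    set A : Set Ω := {ω | ∀ N, ε ≤ (μ[g N|(⨆ n, ℱ n : MeasurableSpace Ω)]) ω} with hA_def
    have hAle : ∀ N, (μ A).toReal ≤ (∫ ω, g N ω ∂μ) / ε := by
      intro N
      have hsub : A ⊆ {ω | ε ≤ (μ[g N|(⨆ n, ℱ n : MeasurableSpace Ω)]) ω} :=
        fun ω hω => hω N
      have hmono : (μ A).toReal ≤
          (μ {ω | ε ≤ (μ[g N|(⨆ n, ℱ n : MeasurableSpace Ω)]) ω}).toReal :=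
        ENNReal.toReal_mono (measure_ne_top μ _) (measure_mono hsub)
      have hmarkov := mul_meas_ge_le_integral_of_nonneg
        (μ := μ) (f := μ[g N|(⨆ n, ℱ n : MeasurableSpace Ω)])
        (condExp_nonneg (Eventually.of_forall fun ω => ENNReal.toReal_nonneg))
        integrable_condExp ε
      rw [integral_condExp hm] at hmarkov
      refine hmono.trans ?_
      rw [le_div_iff₀ hε]
      rw [measureReal_def] at hmarkov
      linarith [hmarkov]
    have hA0' : (μ A).toReal ≤ 0 := by
      have := ge_of_tendsto' (hI.div_const ε) hAle
      simpa using this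
    have : μ A = 0 := by
      have := le_antisymm hA0' ENNReal.toReal_nonneg
      exact (ENNReal.toReal_eq_zero_iff _).1 this |>.resolve_right (measure_ne_top μ _)
    have hAc : ∀ᵐ ω ∂μ, ω ∉ A := by
      rw [ae_iff]
      simpa [hA_def] using this
    filter_upwards [hAc] with ω hω
    simp only [hA_def, Set.mem_setOf_eq, not_forall, not_le] at hω
    exact hω
  -- conditional expectation facts
  set D : ℕ → Ω → ℂ := fun n => Y n - Ylim with hD_def
  have hD : ∀ n, Integrable (D n) μ := fun n => (hint n).sub hYlimInt
  have hc1 : ∀ᵐ ω ∂μ, ∀ N n, N ≤ n →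
      (μ[fun ω' => ‖D n ω'‖|ℱ n]) ω ≤ (μ[g N|ℱ n]) ω := by
    rw [ae_all_iff]
    intro N
    rw [ae_all_iff]
    intro n
    by_cases hNn : N ≤ n
    · have hle : (fun ω' => ‖D n ω'‖) ≤ᵐ[μ] g N := by
        filter_upwards [hmaster] with ω hω
        have := hω.1 N (n - N)
        rwa [Nat.add_sub_cancel' hNn] at this
      filter_upwards [condExp_mono (hD n).norm (hgint N) hle] with ω hω _
      exact hω
    · exact Eventually.of_forall fun ω h => absurd h hNn
  have hc2 : ∀ᵐ ω ∂μ, ∀ N, Tendsto (fun n => (μ[g N|ℱ n]) ω) atTop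
      (𝓝 ((μ[g N|(⨆ n, ℱ n : MeasurableSpace Ω)]) ω)) :=
    ae_all_iff.2 fun N => tendsto_ae_condExp (g N)
  have hc3 : ∀ᵐ ω ∂μ, Tendsto (fun n => (μ[Ylim|ℱ n]) ω) atTop
      (𝓝 ((μ[Ylim|(⨆ n, ℱ n : MeasurableSpace Ω)]) ω)) := by
    have hreL := tendsto_ae_condExp (μ := μ) (ℱ := ℱ) (fun ω => (Ylim ω).re)
    have himL := tendsto_ae_condExp (μ := μ) (ℱ := ℱ) (fun ω => (Ylim ω).im)
    filter_upwards [hreL, himL,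
      ae_all_iff.2 (fun n => condexp_re_comm (ℱ.le n) hYlimInt),
      ae_all_iff.2 (fun n => condexp_im_comm (ℱ.le n) hYlimInt),
      condexp_re_comm hm hYlimInt, condexp_im_comm hm hYlimInt] with ω h1 h2 h3 h4 h5 h6
    have hre' : Tendsto (fun n => ((μ[Ylim|ℱ n]) ω).re) atTop
        (𝓝 (((μ[Ylim|(⨆ n, ℱ n : MeasurableSpace Ω)]) ω).re)) := by
      have := h1.congr fun n => (h3 n).symm
      rwa [← h5] at this
    have him' : Tendsto (fun n => ((μ[Ylim|ℱ n]) ω).im) atTop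
        (𝓝 (((μ[Ylim|(⨆ n, ℱ n : MeasurableSpace Ω)]) ω).im)) := by
      have := h2.congr fun n => (h4 n).symm
      rwa [← h6] at this
    have := ((Complex.continuous_ofReal.tendsto _).comp hre').add
      (((Complex.continuous_ofReal.tendsto _).comp him').mul_const Complex.I)
    simpa only [Function.comp_def, Complex.re_add_im] using this
  have hc4 : ∀ᵐ ω ∂μ, ∀ n,
      (μ[D n|ℱ n]) ω = (μ[Y n|ℱ n]) ω - (μ[Ylim|ℱ n]) ω :=
    ae_all_iff.2 fun n => by
      filter_upwards [condExp_sub (m := ℱ n) (hint n) hYlimInt] with ω hω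
      simpa using hω
  have hc5 : ∀ᵐ ω ∂μ, ∀ n,
      ‖(μ[D n|ℱ n]) ω‖ ≤ 2 * (μ[fun ω' => ‖D n ω'‖|ℱ n]) ω :=
    ae_all_iff.2 fun n => norm_condexp_le_two (ℱ.le n) (hD n)
  -- final argument
  filter_upwards [hc1, hc2, hc3, hc4, hc5, hA0] with ω h1 h2 h3 h4 h5 hA
  rw [Metric.tendsto_atTop]
  intro ε hε
  obtain ⟨k, hk⟩ : ∃ k : ℕ, 1 / ((k : ℝ) + 1) < ε / 8 := exists_nat_one_div_lt (by linarith)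
  obtain ⟨N0, hN0⟩ := hA k
  have hev1 : ∀ᶠ n in atTop, (μ[g N0|ℱ n]) ω < 1 / ((k : ℝ) + 1) :=
    (h2 N0).eventually (Iio_mem_nhds hN0)
  obtain ⟨M1, hM1⟩ := eventually_atTop.1 hev1
  obtain ⟨M2, hM2⟩ := Metric.tendsto_atTop.1 h3 (ε / 2) (by linarith)
  refine ⟨max N0 (max M1 M2), fun n hn => ?_⟩
  have hnN0 : N0 ≤ n := le_trans (le_max_left _ _) hn
  have hnM1 : M1 ≤ n := le_trans (le_trans (le_max_left _ _) (le_max_right _ _)) hn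
  have hnM2 : M2 ≤ n := le_trans (le_trans (le_max_right _ _) (le_max_right _ _)) hn
  have key : dist ((μ[Y n|ℱ n]) ω) ((μ[Ylim|ℱ n]) ω) < ε / 2 := by
    rw [dist_eq_norm]
    have e1 : (μ[Y n|ℱ n]) ω - (μ[Ylim|ℱ n]) ω = (μ[D n|ℱ n]) ω := (h4 n).symm
    rw [e1]
    calc ‖(μ[D n|ℱ n]) ω‖ ≤ 2 * (μ[fun ω' => ‖D n ω'‖|ℱ n]) ω := h5 n
      _ ≤ 2 * (μ[g N0|ℱ n]) ω := by linarith [h1 N0 n hnN0]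
      _ < 2 * (1 / ((k : ℝ) + 1)) := by linarith [hM1 n hnM1, h1 N0 n hnN0]
      _ < ε / 2 := by linarith
  calc dist ((μ[Y n|ℱ n]) ω) ((μ[Ylim|(⨆ n, ℱ n : MeasurableSpace Ω)]) ω)
      ≤ dist ((μ[Y n|ℱ n]) ω) ((μ[Ylim|ℱ n]) ω) +
        dist ((μ[Ylim|ℱ n]) ω) ((μ[Ylim|(⨆ n, ℱ n : MeasurableSpace Ω)]) ω) :=
        dist_triangle _ _ _
    _ < ε / 2 + ε / 2 := add_lt_add key (hM2 n hnM2)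
    _ = ε := by ring
end

section
/- In the HRRU model, the sequence (Z_n) of urn proportions satisfies Z_n - Z_{n-1} = R_n (X_n - N_n Z_{n-1}) / S_n, and (Z_n) is a martingale with respect to the filtration (H_n) where H_{n-1} = F_{n-1} ∨ σ(N_n) ∨ σ(R_n). -/
open MeasureTheory ProbabilityTheory Filter
open scoped Topology

noncomputable section

/-- Total number of balls at time `n` in the HRRU model with initial composition
`a + b` and draws/reinforcements `N`, `R` (time is indexed from `1`). -/
def hrruS {Ω : Type*} (a b : ℕ) (N R : ℕ → Ω → ℕ) (n : ℕ) (ω : Ω) : ℕ :=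
  a + b + ∑ j ∈ Finset.Icc 1 n, N j ω * R j ω

/-- Number of balls of color A at time `n` in the HRRU model. -/
def hrruHa {Ω : Type*} (a : ℕ) (X R : ℕ → Ω → ℕ) (n : ℕ) (ω : Ω) : ℕ :=
  a + ∑ j ∈ Finset.Icc 1 n, X j ω * R j ω

/-- Proportion of balls of color A at time `n` in the HRRU model. -/
def hrruZ {Ω : Type*} (a b : ℕ) (N X R : ℕ → Ω → ℕ) (n : ℕ) (ω : Ω) : ℝ :=
  (hrruHa a X R n ω : ℝ) / (hrruS a b N R n ω : ℝ)

/-- The hypergeometric probability mass function with parameters `Np, S, H`: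
`P(X = k) = C(H,k) C(S-H, Np-k) / C(S,Np)`. -/
def hypergeomPMF (Np S H k : ℕ) : ℝ :=
  ((H.choose k : ℝ) * ((S - H).choose (Np - k) : ℝ)) / (S.choose Np : ℝ)

/-- The natural filtration `ℱ n = σ(N₁,X₁,R₁,…,N_n,X_n,R_n)` of the HRRU model. -/
def hrruF {Ω : Type*} (N X R : ℕ → Ω → ℕ) (n : ℕ) : MeasurableSpace Ω :=
  ⨆ j ∈ Finset.Icc 1 n,
    (MeasurableSpace.comap (N j) ⊤ ⊔ MeasurableSpace.comap (X j) ⊤ ⊔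
      MeasurableSpace.comap (R j) ⊤)

/-- The σ-field `𝒢 (n-1) = ℱ (n-1) ∨ σ(N n)` of the HRRU model. -/
def hrruG {Ω : Type*} (N X R : ℕ → Ω → ℕ) (n : ℕ) : MeasurableSpace Ω :=
  hrruF N X R n ⊔ MeasurableSpace.comap (N (n + 1)) ⊤

/-- The σ-field `ℋ (n-1) = ℱ (n-1) ∨ σ(N n) ∨ σ(R n)` of the HRRU model. -/
def hrruHfilt {Ω : Type*} (N X R : ℕ → Ω → ℕ) (n : ℕ) : MeasurableSpace Ω :=
  hrruG N X R n ⊔ MeasurableSpace.comap (R (n + 1)) ⊤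

/-- The HRRU (Hypergeometric Randomly Reinforced Urn) model: an urn starts with
`a ≥ 1` balls of color A and `b ≥ 1` balls of color B.  At each time `n ≥ 1`,
`N n` balls are drawn without replacement, `X n` of them being of color A, and
the drawn balls are returned together with `R n * X n` balls of color A and
`R n * (N n - X n)` balls of color B. -/
structure IsHRRU {Ω : Type*} [m0 : MeasurableSpace Ω] (μ : Measure Ω)
    (a b : ℕ) (N X R : ℕ → Ω → ℕ) : Prop where
  ha : 1 ≤ a
  hb : 1 ≤ b
  measN : ∀ n, Measurable (N n)
  measX : ∀ n, Measurable (X n)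
  measR : ∀ n, Measurable (R n)
  /-- (i): `N n` takes values in `{1, …, S (n-1)}`. -/
  rangeN : ∀ n, 1 ≤ n → ∀ ω, 1 ≤ N n ω ∧ N n ω ≤ hrruS a b N R (n - 1) ω
  /-- `X n ≤ N n`: one cannot extract more A-balls than balls. -/
  rangeX : ∀ n, 1 ≤ n → ∀ ω, X n ω ≤ N n ω
  /-- `R n ∈ ℕ ∖ {0}`. -/
  rangeR : ∀ n, 1 ≤ n → ∀ ω, 1 ≤ R n ω
  /-- (ii): the conditional distribution of `X n` given
  `ℱ (n-1) ∨ σ(N n)` is hypergeometric with parameters `N n, S (n-1), H (n-1)`. -/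
  hypergeom : ∀ n, 1 ≤ n → ∀ k : ℕ,
    (μ[fun ω => if X n ω = k then (1 : ℝ) else 0|hrruG N X R (n - 1)]) =ᵐ[μ]
      fun ω => hypergeomPMF (N n ω) (hrruS a b N R (n - 1) ω) (hrruHa a X R (n - 1) ω) k
  /-- (iii): `R n` is independent of `(N₁,X₁,R₁,…,N_{n-1},X_{n-1},R_{n-1},N_n,X_n)`. -/
  indepR : ∀ n, 1 ≤ n →
    Indep (MeasurableSpace.comap (R n) ⊤)
      (hrruG N X R (n - 1) ⊔ MeasurableSpace.comap (X n) ⊤) μ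

/-! ### Auxiliary combinatorial lemmas -/

lemma hyper_nat_key (m S H : ℕ) (hm : 1 ≤ m) (hH : H ≤ S) :
    ∑ k ∈ Finset.range (m + 1), k * H.choose k * (S - H).choose (m - k)
      = H * (S - 1).choose (m - 1) := by
  rcases Nat.eq_zero_or_pos H with rfl | hH1
  · rw [Nat.zero_mul]
    apply Finset.sum_eq_zero
    intro k _
    rcases Nat.eq_zero_or_pos k with rfl | hk
    · simp
    · simp [Nat.choose_eq_zero_of_lt hk]
  obtain ⟨H', rfl⟩ : ∃ H', H = H' + 1 := ⟨H - 1, (Nat.succ_pred_eq_of_pos hH1).symm⟩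
  obtain ⟨m', rfl⟩ : ∃ m', m = m' + 1 := ⟨m - 1, (Nat.succ_pred_eq_of_pos hm).symm⟩
  rw [Finset.sum_range_succ']
  simp only [Nat.zero_mul, Nat.mul_zero, zero_mul, add_zero]
  have h1 : ∀ j, (j + 1) * (H' + 1).choose (j + 1) * (S - (H' + 1)).choose (m' + 1 - (j + 1))
      = (H' + 1) * (H'.choose j * (S - (H' + 1)).choose (m' - j)) := by
    intro j
    have := Nat.add_one_mul_choose_eq H' j
    have hms : m' + 1 - (j + 1) = m' - j := by omega
    rw [hms]
    calc (j + 1) * (H' + 1).choose (j + 1) * (S - (H' + 1)).choose (m' - j)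
        = ((H' + 1) * H'.choose j) * (S - (H' + 1)).choose (m' - j) := by
          rw [this]; ring
      _ = (H' + 1) * (H'.choose j * (S - (H' + 1)).choose (m' - j)) := by ring
  simp only [h1]
  rw [← Finset.mul_sum]
  simp only [Nat.add_sub_cancel]
  have hv := Nat.add_choose_eq H' (S - (H' + 1)) m'
  have hsum := Finset.Nat.sum_antidiagonal_eq_sum_range_succ_mk
    (fun ij => H'.choose ij.1 * (S - (H' + 1)).choose ij.2) m'
  have hSH : H' + (S - (H' + 1)) = S - 1 := by omega
  rw [hSH] at hv
  rw [Nat.mul_left_cancel_iff (by omega), hv, hsum]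

/-- The mean of the hypergeometric distribution. -/
lemma hyper_mean (m S H : ℕ) (hm : 1 ≤ m) (hmS : m ≤ S) (hH : H ≤ S) :
    ∑ k ∈ Finset.range (m + 1), (k : ℝ) * hypergeomPMF m S H k = (m : ℝ) * H / S := by
  have hS : 1 ≤ S := le_trans hm hmS
  have hS0 : (S : ℝ) ≠ 0 := Nat.cast_ne_zero.mpr (by omega)
  have hC0 : ((S.choose m : ℕ) : ℝ) ≠ 0 :=
    Nat.cast_ne_zero.mpr (Nat.choose_pos hmS).ne'
  have key := hyper_nat_key m S H hm hH
  have hmc : S * (S - 1).choose (m - 1) = S.choose m * m := by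
    have := Nat.add_one_mul_choose_eq (S - 1) (m - 1)
    rw [Nat.sub_add_cancel hS, Nat.sub_add_cancel hm] at this
    exact this
  have hterm : ∀ k : ℕ, (k : ℝ) * hypergeomPMF m S H k
      = ((k * H.choose k * (S - H).choose (m - k) : ℕ) : ℝ) / (S.choose m : ℝ) := by
    intro k; unfold hypergeomPMF; push_cast; ring
  simp only [hterm]
  rw [← Finset.sum_div, ← Nat.cast_sum, key]
  have hmcR : (S : ℝ) * ((S - 1).choose (m - 1)) = (S.choose m : ℝ) * m := by
    exact_mod_cast congrArg (Nat.cast : ℕ → ℝ) hmc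
  push_cast
  field_simp
  linear_combination (H : ℝ) * hmcR

lemma hyper_nonneg (Np S H k : ℕ) : 0 ≤ hypergeomPMF Np S H k := by
  unfold hypergeomPMF; positivity

lemma hyper_le_one {Np S H k : ℕ} (h1 : k ≤ Np) (h2 : Np ≤ S) (h3 : H ≤ S) :
    hypergeomPMF Np S H k ≤ 1 := by
  unfold hypergeomPMF
  rw [div_le_one (by exact_mod_cast Nat.choose_pos h2)]
  have hnat : H.choose k * (S - H).choose (Np - k) ≤ S.choose Np := by
    have hv := Nat.add_choose_eq H (S - H) Np
    rw [Nat.add_sub_cancel' h3] at hv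
    rw [hv]
    exact Finset.single_le_sum (f := fun ij : ℕ × ℕ => H.choose ij.1 * (S - H).choose ij.2)
      (fun i _ => Nat.zero_le _)
      (show (k, Np - k) ∈ Finset.HasAntidiagonal.antidiagonal Np from Finset.HasAntidiagonal.mem_antidiagonal.mpr (by omega))
  exact_mod_cast hnat

/-! ### Structural lemmas for the HRRU model -/

section Lemmas

variable {Ω : Type*} {a b : ℕ} {N X R : ℕ → Ω → ℕ}

lemma hrruS_pos (ha : 1 ≤ a) (n : ℕ) (ω : Ω) : 0 < hrruS a b N R n ω := by
  unfold hrruS; omega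

lemma hrruS_succ (n : ℕ) (ω : Ω) :
    hrruS a b N R (n + 1) ω = hrruS a b N R n ω + N (n + 1) ω * R (n + 1) ω := by
  unfold hrruS
  rw [Finset.sum_Icc_succ_top (by omega : 1 ≤ n + 1)]
  ring

lemma hrruHa_succ (n : ℕ) (ω : Ω) :
    hrruHa a X R (n + 1) ω = hrruHa a X R n ω + X (n + 1) ω * R (n + 1) ω := by
  unfold hrruHa
  rw [Finset.sum_Icc_succ_top (by omega : 1 ≤ n + 1)]
  ring

lemma hrruHa_le (hX : ∀ j, 1 ≤ j → ∀ ω, X j ω ≤ N j ω) (n : ℕ) (ω : Ω) :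
    hrruHa a X R n ω ≤ hrruS a b N R n ω := by
  unfold hrruHa hrruS
  have : ∑ j ∈ Finset.Icc 1 n, X j ω * R j ω ≤ ∑ j ∈ Finset.Icc 1 n, N j ω * R j ω := by
    apply Finset.sum_le_sum
    intro j hj
    exact Nat.mul_le_mul_right _ (hX j (Finset.mem_Icc.mp hj).1 ω)
  omega

lemma hrruZ_nonneg (n : ℕ) (ω : Ω) : 0 ≤ hrruZ a b N X R n ω := by
  unfold hrruZ; positivity

lemma hrruZ_le_one (ha : 1 ≤ a) (hX : ∀ j, 1 ≤ j → ∀ ω, X j ω ≤ N j ω) (n : ℕ) (ω : Ω) :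
    hrruZ a b N X R n ω ≤ 1 := by
  unfold hrruZ
  rw [div_le_one (by exact_mod_cast hrruS_pos ha n ω)]
  exact_mod_cast hrruHa_le hX n ω

lemma measurable_comap_self (f : Ω → ℕ) :
    Measurable[MeasurableSpace.comap f ⊤] f := fun s _ => ⟨s, trivial, rfl⟩

lemma comapN_le_hrruF {j n : ℕ} (h1 : 1 ≤ j) (h2 : j ≤ n) :
    MeasurableSpace.comap (N j) ⊤ ≤ hrruF N X R n := by
  refine le_trans ?_ (le_biSup _ (Finset.mem_Icc.mpr ⟨h1, h2⟩))
  exact le_sup_of_le_left le_sup_left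

lemma comapX_le_hrruF {j n : ℕ} (h1 : 1 ≤ j) (h2 : j ≤ n) :
    MeasurableSpace.comap (X j) ⊤ ≤ hrruF N X R n := by
  refine le_trans ?_ (le_biSup _ (Finset.mem_Icc.mpr ⟨h1, h2⟩))
  exact le_sup_of_le_left le_sup_right

lemma comapR_le_hrruF {j n : ℕ} (h1 : 1 ≤ j) (h2 : j ≤ n) :
    MeasurableSpace.comap (R j) ⊤ ≤ hrruF N X R n := by
  refine le_trans ?_ (le_biSup _ (Finset.mem_Icc.mpr ⟨h1, h2⟩))
  exact le_sup_right

lemma measurable_N_F {j n : ℕ} (h1 : 1 ≤ j) (h2 : j ≤ n) :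
    Measurable[hrruF N X R n] (N j) :=
  (measurable_comap_self (N j)).mono (comapN_le_hrruF h1 h2) le_rfl

lemma measurable_X_F {j n : ℕ} (h1 : 1 ≤ j) (h2 : j ≤ n) :
    Measurable[hrruF N X R n] (X j) :=
  (measurable_comap_self (X j)).mono (comapX_le_hrruF h1 h2) le_rfl

lemma measurable_R_F {j n : ℕ} (h1 : 1 ≤ j) (h2 : j ≤ n) :
    Measurable[hrruF N X R n] (R j) :=
  (measurable_comap_self (R j)).mono (comapR_le_hrruF h1 h2) le_rfl

lemma measurable_S_F (n : ℕ) : Measurable[hrruF N X R n] (hrruS a b N R n) := by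
  unfold hrruS
  apply Measurable.add measurable_const
  apply Finset.measurable_sum
  intro j hj
  obtain ⟨h1, h2⟩ := Finset.mem_Icc.mp hj
  exact (measurable_N_F h1 h2).mul (measurable_R_F h1 h2)

lemma measurable_Ha_F (n : ℕ) : Measurable[hrruF N X R n] (hrruHa a X R n) := by
  unfold hrruHa
  apply Measurable.add measurable_const
  apply Finset.measurable_sum
  intro j hj
  obtain ⟨h1, h2⟩ := Finset.mem_Icc.mp hj
  exact (measurable_X_F h1 h2).mul (measurable_R_F h1 h2)

lemma measurable_Z_F (n : ℕ) : Measurable[hrruF N X R n] (hrruZ a b N X R n) := by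
  unfold hrruZ
  exact (measurable_from_top.comp (measurable_Ha_F n)).div
    (measurable_from_top.comp (measurable_S_F n))

lemma hrruF_le_G (n : ℕ) : hrruF N X R n ≤ hrruG N X R n := le_sup_left
lemma hrruG_le_H (n : ℕ) : hrruG N X R n ≤ hrruHfilt N X R n := le_sup_left
lemma hrruF_le_H (n : ℕ) : hrruF N X R n ≤ hrruHfilt N X R n :=
  (hrruF_le_G n).trans (hrruG_le_H n)

lemma hrruF_le_m0 {m0 : MeasurableSpace Ω} (hN : ∀ j, Measurable (N j))
    (hX : ∀ j, Measurable (X j)) (hR : ∀ j, Measurable (R j)) (n : ℕ) :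
    hrruF N X R n ≤ m0 := by
  apply iSup₂_le
  intro j _
  exact sup_le (sup_le (hN j).comap_le (hX j).comap_le) (hR j).comap_le

lemma hrruG_le_m0 {m0 : MeasurableSpace Ω} (hN : ∀ j, Measurable (N j))
    (hX : ∀ j, Measurable (X j)) (hR : ∀ j, Measurable (R j)) (n : ℕ) :
    hrruG N X R n ≤ m0 :=
  sup_le (hrruF_le_m0 hN hX hR n) (hN (n + 1)).comap_le

lemma hrruH_le_m0 {m0 : MeasurableSpace Ω} (hN : ∀ j, Measurable (N j))
    (hX : ∀ j, Measurable (X j)) (hR : ∀ j, Measurable (R j)) (n : ℕ) :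
    hrruHfilt N X R n ≤ m0 :=
  sup_le (hrruG_le_m0 hN hX hR n) (hR (n + 1)).comap_le

/-- Auxiliary σ-algebra for the atom decomposition. -/
def atomSigma (m₁ : MeasurableSpace Ω) (f : Ω → ℕ) : MeasurableSpace Ω where
  MeasurableSet' A := ∀ r : ℕ, ∃ G, MeasurableSet[m₁] G ∧ A ∩ f ⁻¹' {r} = G ∩ f ⁻¹' {r}
  measurableSet_empty := fun r => ⟨∅, MeasurableSet.empty, by simp⟩
  measurableSet_compl := by
    intro A hA r
    obtain ⟨G, hG, hAG⟩ := hA r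
    refine ⟨Gᶜ, hG.compl, ?_⟩
    ext x
    have := Set.ext_iff.mp hAG x
    simp only [Set.mem_inter_iff, Set.mem_compl_iff, Set.mem_preimage,
      Set.mem_singleton_iff] at *
    tauto
  measurableSet_iUnion := by
    intro g hg r
    choose G hG hAG using fun i => hg i r
    refine ⟨⋃ i, G i, MeasurableSet.iUnion hG, ?_⟩
    rw [Set.iUnion_inter, Set.iUnion_inter]
    exact Set.iUnion_congr hAG

/-- Atom decomposition for a σ-algebra of the form `m₁ ⊔ σ(f)` with `f` ℕ-valued. -/
lemma sup_comap_atom {m₁ : MeasurableSpace Ω} {f : Ω → ℕ} {A : Set Ω}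
    (hA : MeasurableSet[m₁ ⊔ MeasurableSpace.comap f ⊤] A) (r : ℕ) :
    ∃ G, MeasurableSet[m₁] G ∧ A ∩ f ⁻¹' {r} = G ∩ f ⁻¹' {r} := by
  have hle : m₁ ⊔ MeasurableSpace.comap f ⊤ ≤ atomSigma m₁ f := by
    apply sup_le
    · intro A hA r
      exact ⟨A, hA, rfl⟩
    · intro A hA r
      obtain ⟨s, -, rfl⟩ := hA
      by_cases hr : r ∈ s
      · refine ⟨Set.univ, MeasurableSet.univ, ?_⟩
        ext x
        simp only [Set.mem_inter_iff, Set.mem_preimage, Set.mem_singleton_iff, Set.univ_inter,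
          Set.mem_univ, true_and]
        constructor
        · rintro ⟨-, h⟩; exact h
        · rintro h; exact ⟨by rwa [h], h⟩
      · refine ⟨∅, MeasurableSet.empty, ?_⟩
        ext x
        simp only [Set.mem_inter_iff, Set.mem_preimage, Set.mem_singleton_iff, Set.empty_inter,
          Set.mem_empty_iff_false, iff_false, not_and]
        rintro hx rfl; exact hr hx
  exact hle A hA r

/-- Integrability from a uniform bound (finite measure). -/
lemma integrable_of_bound {m0 : MeasurableSpace Ω} {μ : Measure Ω} [IsFiniteMeasure μ]
    {f : Ω → ℝ} (hf : Measurable f) (C : ℝ) (hC : ∀ ω, ‖f ω‖ ≤ C) : Integrable f μ :=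
  (integrable_const C).mono' hf.aestronglyMeasurable (ae_of_all _ hC)

end Lemmas

/-- in the HRRU model the proportion sequence satisfies
`Z n - Z (n-1) = R n * (X n - N n * Z (n-1)) / S n` and `(Z n)` is a martingale
with respect to the filtration `(ℋ n)`, `ℋ (n-1) = ℱ (n-1) ∨ σ(N n) ∨ σ(R n)`. -/
theorem stmt3
    {Ω : Type*} [m0 : MeasurableSpace Ω] (μ : Measure Ω) [IsProbabilityMeasure μ]
    (a b : ℕ) (N X R : ℕ → Ω → ℕ) (h : IsHRRU μ a b N X R) :
    (∀ n, 1 ≤ n → ∀ ω,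
      hrruZ a b N X R n ω - hrruZ a b N X R (n - 1) ω =
        (R n ω : ℝ) * ((X n ω : ℝ) - (N n ω : ℝ) * hrruZ a b N X R (n - 1) ω) /
          (hrruS a b N R n ω : ℝ)) ∧
    (∀ n, StronglyMeasurable[hrruHfilt N X R n] (hrruZ a b N X R n)) ∧
    (∀ n, 1 ≤ n →
      (μ[hrruZ a b N X R n|hrruHfilt N X R (n - 1)]) =ᵐ[μ] hrruZ a b N X R (n - 1)) := by
  -- Part 1: the pointwise algebraic identity
  have part1 : ∀ n, 1 ≤ n → ∀ ω,
      hrruZ a b N X R n ω - hrruZ a b N X R (n - 1) ω =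
        (R n ω : ℝ) * ((X n ω : ℝ) - (N n ω : ℝ) * hrruZ a b N X R (n - 1) ω) /
          (hrruS a b N R n ω : ℝ) := by
    intro n hn ω
    obtain ⟨p, rfl⟩ : ∃ p, n = p + 1 := ⟨n - 1, by omega⟩
    simp only [Nat.add_sub_cancel]
    have hs : (0 : ℝ) < (hrruS a b N R p ω : ℝ) := by exact_mod_cast hrruS_pos h.ha p ω
    have hs' : (0 : ℝ) < (hrruS a b N R (p + 1) ω : ℝ) := by
      exact_mod_cast hrruS_pos h.ha (p + 1) ω
    have hSr : (hrruS a b N R (p + 1) ω : ℝ)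
        = (hrruS a b N R p ω : ℝ) + (N (p + 1) ω : ℝ) * (R (p + 1) ω : ℝ) := by
      exact_mod_cast congrArg (Nat.cast : ℕ → ℝ) (hrruS_succ p ω)
    have hHr : (hrruHa a X R (p + 1) ω : ℝ)
        = (hrruHa a X R p ω : ℝ) + (X (p + 1) ω : ℝ) * (R (p + 1) ω : ℝ) := by
      exact_mod_cast congrArg (Nat.cast : ℕ → ℝ) (hrruHa_succ p ω)
    rw [hSr] at hs'
    unfold hrruZ
    rw [hSr, hHr]
    field_simp
    ring
  -- Part 2: adaptedness
  have part2 : ∀ n, StronglyMeasurable[hrruHfilt N X R n] (hrruZ a b N X R n) := fun n =>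
    ((measurable_Z_F n).mono (hrruF_le_H n) le_rfl).stronglyMeasurable
  refine ⟨part1, part2, ?_⟩
  -- Part 3: the martingale property
  intro n hn
  obtain ⟨p, rfl⟩ : ∃ p, n = p + 1 := ⟨n - 1, by omega⟩
  simp only [Nat.add_sub_cancel]
  have hmH : hrruHfilt N X R p ≤ m0 := hrruH_le_m0 h.measN h.measX h.measR p
  have hmG : hrruG N X R p ≤ m0 := hrruG_le_m0 h.measN h.measX h.measR p
  have hmF : hrruF N X R p ≤ m0 := hrruF_le_m0 h.measN h.measX h.measR p
  have hZm : ∀ k, Measurable (hrruZ a b N X R k) := fun k =>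
    (measurable_Z_F k).mono (hrruF_le_m0 h.measN h.measX h.measR k) le_rfl
  have hZb : ∀ k ω, ‖hrruZ a b N X R k ω‖ ≤ 1 := by
    intro k ω
    rw [Real.norm_eq_abs, abs_le]
    exact ⟨by linarith [hrruZ_nonneg (a := a) (b := b) (N := N) (X := X) (R := R) k ω],
      hrruZ_le_one h.ha h.rangeX k ω⟩
  have hZint : ∀ k, Integrable (hrruZ a b N X R k) μ := fun k =>
    integrable_of_bound (hZm k) 1 (hZb k)
  set D : Ω → ℝ := fun ω => hrruZ a b N X R (p + 1) ω - hrruZ a b N X R p ω with hDdef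
  have hDm : Measurable D := (hZm (p + 1)).sub (hZm p)
  have hDint : Integrable D μ := (hZint (p + 1)).sub (hZint p)
  -- the σ-algebra 𝒢 ∨ σ(X (p+1))
  have hmGX : hrruG N X R p ⊔ MeasurableSpace.comap (X (p + 1)) ⊤ ≤ m0 :=
    sup_le hmG (h.measX (p + 1)).comap_le
  -- Key step: the increment integrates to zero on every ℋ p - measurable set.
  have key : ∀ A, MeasurableSet[hrruHfilt N X R p] A → ∫ ω in A, D ω ∂μ = 0 := by
    intro A hA
    have hAm0 : MeasurableSet A := hmH A hA
    set P : ℕ × ℕ → Set Ω :=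
      fun mr => A ∩ N (p + 1) ⁻¹' {mr.1} ∩ R (p + 1) ⁻¹' {mr.2} with hPdef
    have hPm : ∀ i, MeasurableSet (P i) := fun i =>
      (hAm0.inter (h.measN (p + 1) (measurableSet_singleton _))).inter
        (h.measR (p + 1) (measurableSet_singleton _))
    have hPd : Pairwise (Function.onFun Disjoint P) := by
      rintro ⟨m1, r1⟩ ⟨m2, r2⟩ hne
      rw [Function.onFun, Set.disjoint_left]
      rintro ω ⟨⟨-, h1⟩, h2⟩ ⟨⟨-, h3⟩, h4⟩
      simp only [Set.mem_preimage, Set.mem_singleton_iff] at h1 h2 h3 h4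
      exact hne (by simp only [Prod.mk.injEq]; omega)
    have hPu : (⋃ i, P i) = A := by
      ext ω
      simp only [Set.mem_iUnion]
      constructor
      · rintro ⟨i, ⟨⟨hA', -⟩, -⟩⟩; exact hA'
      · intro hω; exact ⟨(N (p + 1) ω, R (p + 1) ω), ⟨⟨hω, rfl⟩, rfl⟩⟩
    rw [← hPu, integral_iUnion hPm hPd hDint.integrableOn]
    have hzero : ∀ i, ∫ ω in P i, D ω ∂μ = 0 := by
      rintro ⟨m, r⟩
      by_cases hmr : 1 ≤ m ∧ 1 ≤ r
      swap
      · have hPe : P (m, r) = ∅ := by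
          ext ω
          simp only [hPdef, Set.mem_inter_iff, Set.mem_preimage, Set.mem_singleton_iff,
            Set.mem_empty_iff_false, iff_false, not_and]
          rintro ⟨-, hN1⟩ hR1
          have := (h.rangeN (p + 1) (by omega) ω).1
          have := h.rangeR (p + 1) (by omega) ω
          omega
        rw [hPe]
        simp
      obtain ⟨hm1, hr1⟩ := hmr
      -- atom decomposition of A along R (p+1)
      have hA' : MeasurableSet[hrruG N X R p ⊔ MeasurableSpace.comap (R (p + 1)) ⊤] A := hA
      obtain ⟨G, hG, hAG⟩ := sup_comap_atom hA' r
      set E := G ∩ N (p + 1) ⁻¹' {m} with hEdef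
      have hNmset : MeasurableSet[MeasurableSpace.comap (N (p + 1)) ⊤] (N (p + 1) ⁻¹' {m}) :=
        measurable_comap_self (N (p + 1)) (measurableSet_singleton m)
      have hEG : MeasurableSet[hrruG N X R p] E :=
        hG.inter ((le_sup_right :
          MeasurableSpace.comap (N (p + 1)) ⊤ ≤ hrruG N X R p) _ hNmset)
      have hEm0 : MeasurableSet E := hmG E hEG
      have hsetEq : P (m, r) = E ∩ R (p + 1) ⁻¹' {r} := by
        ext ω
        have hωeq := Set.ext_iff.mp hAG ω
        simp only [hPdef, hEdef, Set.mem_inter_iff, Set.mem_preimage,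
          Set.mem_singleton_iff] at *
        tauto
      -- the functions involved
      set c : Ω → ℝ := fun ω => (r : ℝ) / ((hrruS a b N R p ω : ℝ) + m * r) with hcdef
      set φ : Ω → ℝ :=
        fun ω => c ω * ((X (p + 1) ω : ℝ) - m * hrruZ a b N X R p ω) with hφdef
      set ψ : Ω → ℝ := E.indicator φ with hψdef
      set ind : Ω → ℝ := (R (p + 1) ⁻¹' {r}).indicator (fun _ => 1) with hinddef
      have hSpos : ∀ ω, (0 : ℝ) < (hrruS a b N R p ω : ℝ) := fun ω => by
        exact_mod_cast hrruS_pos h.ha p ω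
      have hden : ∀ ω, (0 : ℝ) < (hrruS a b N R p ω : ℝ) + m * r := fun ω => by
        have := hSpos ω; positivity
      have hc0 : ∀ ω, 0 ≤ c ω := fun ω => by
        have := hden ω; rw [hcdef]; positivity
      have hc1 : ∀ ω, c ω ≤ 1 := by
        intro ω
        rw [hcdef, div_le_one (hden ω)]
        have h1 : (1 : ℝ) ≤ (m : ℝ) := by exact_mod_cast hm1
        have h2 : (0 : ℝ) < (r : ℝ) := by exact_mod_cast hr1
        nlinarith [hSpos ω]
      -- measurability
      have hZpG : Measurable[hrruG N X R p] (hrruZ a b N X R p) :=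
        (measurable_Z_F p).mono (hrruF_le_G p) le_rfl
      have hSpG : Measurable[hrruG N X R p] (hrruS a b N R p) :=
        (measurable_S_F p).mono (hrruF_le_G p) le_rfl
      have hcG : Measurable[hrruG N X R p] c := by
        rw [hcdef]
        exact measurable_const.div
          ((measurable_from_top.comp hSpG).add measurable_const)
      have hXmGX : Measurable[hrruG N X R p ⊔ MeasurableSpace.comap (X (p + 1)) ⊤] (X (p + 1)) :=
        (measurable_comap_self (X (p + 1))).mono le_sup_right le_rfl
      have hφmGX : Measurable[hrruG N X R p ⊔ MeasurableSpace.comap (X (p + 1)) ⊤] φ := by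
        rw [hφdef]
        exact (hcG.mono le_sup_left le_rfl).mul
          ((measurable_from_top.comp hXmGX).sub
            (measurable_const.mul (hZpG.mono le_sup_left le_rfl)))
      have hEmGX : MeasurableSet[hrruG N X R p ⊔ MeasurableSpace.comap (X (p + 1)) ⊤] E :=
        (le_sup_left : _ ≤ hrruG N X R p ⊔ MeasurableSpace.comap (X (p + 1)) ⊤) E hEG
      have hψmGX : Measurable[hrruG N X R p ⊔ MeasurableSpace.comap (X (p + 1)) ⊤] ψ := hφmGX.indicator hEmGX
      have hψm0 : Measurable ψ := hψmGX.mono hmGX le_rfl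
      have hindm0 : Measurable ind :=
        measurable_const.indicator (h.measR (p + 1) (measurableSet_singleton r))
      -- Step (i): rewrite the integral using ψ and ind
      have hXleE : ∀ ω ∈ E, X (p + 1) ω ≤ m := by
        intro ω hω
        have hNm : N (p + 1) ω = m := hω.2
        have := h.rangeX (p + 1) (by omega) ω
        omega
      have hstep1 : ∫ ω in P (m, r), D ω ∂μ = ∫ ω, ψ ω * ind ω ∂μ := by
        rw [hsetEq, ← integral_indicator
          (hEm0.inter (h.measR (p + 1) (measurableSet_singleton r)))]
        congr 1
        funext ω
        by_cases hω : ω ∈ E ∩ R (p + 1) ⁻¹' {r}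
        · obtain ⟨hωE, hωR⟩ := hω
          have hNm : N (p + 1) ω = m := hωE.2
          have hRr : R (p + 1) ω = r := hωR
          rw [Set.indicator_of_mem (Set.mem_inter hωE hωR), hψdef, Set.indicator_of_mem hωE, hinddef,
            Set.indicator_of_mem hωR, mul_one]
          have hp1 := part1 (p + 1) (by omega) ω
          simp only [Nat.add_sub_cancel] at hp1
          have hSr : (hrruS a b N R (p + 1) ω : ℝ)
              = (hrruS a b N R p ω : ℝ) + (N (p + 1) ω : ℝ) * (R (p + 1) ω : ℝ) := by
            exact_mod_cast congrArg (Nat.cast : ℕ → ℝ) (hrruS_succ p ω)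
          rw [hDdef]
          simp only
          rw [hp1, hSr, hNm, hRr, hφdef, hcdef]
          simp only
          ring
        · rw [Set.indicator_of_notMem hω]
          by_cases hωE : ω ∈ E
          · have hωR : ω ∉ R (p + 1) ⁻¹' {r} := fun hr' => hω ⟨hωE, hr'⟩
            rw [hinddef, Set.indicator_of_notMem hωR, mul_zero]
          · rw [hψdef, Set.indicator_of_notMem hωE, zero_mul]
      -- Step (ii): independence factorizes the integral
      have hIndep := h.indepR (p + 1) (by omega)
      simp only [Nat.add_sub_cancel] at hIndep
      have hIF : IndepFun ψ ind μ := by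
        have h1 : MeasurableSpace.comap ψ inferInstance ≤ hrruG N X R p ⊔ MeasurableSpace.comap (X (p + 1)) ⊤ :=
          measurable_iff_comap_le.mp hψmGX
        have hindR : Measurable[MeasurableSpace.comap (R (p + 1)) ⊤] ind :=
          measurable_const.indicator (measurable_comap_self (R (p + 1)) (measurableSet_singleton r))
        have h2 : MeasurableSpace.comap ind inferInstance
            ≤ MeasurableSpace.comap (R (p + 1)) ⊤ := measurable_iff_comap_le.mp hindR
        exact indep_of_indep_of_le_right (indep_of_indep_of_le_left hIndep.symm h1) h2
      have hfact : ∫ ω, ψ ω * ind ω ∂μ = (∫ ω, ψ ω ∂μ) * ∫ ω, ind ω ∂μ :=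
        IndepFun.integral_fun_mul_eq_mul_integral hIF hψm0.aestronglyMeasurable hindm0.aestronglyMeasurable
      rw [hstep1, hfact]
      -- Step (iii): ∫ ψ = 0 by the hypergeometric mean
      suffices hψ0 : ∫ ω, ψ ω ∂μ = 0 by rw [hψ0, zero_mul]
      -- split ψ into two indicator functions
      set f1 : Ω → ℝ := E.indicator (fun ω => c ω * (X (p + 1) ω : ℝ)) with hf1def
      set f2 : Ω → ℝ := E.indicator (fun ω => c ω * (m * hrruZ a b N X R p ω)) with hf2def
      have hcm0 : Measurable c := hcG.mono hmG le_rfl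
      have hf1m : Measurable f1 :=
        (hcm0.mul (measurable_from_top.comp (h.measX (p + 1)))).indicator hEm0
      have hf2m : Measurable f2 :=
        (hcm0.mul (measurable_const.mul (hZm p))).indicator hEm0
      have hf1b : ∀ ω, ‖f1 ω‖ ≤ m := by
        intro ω
        rw [hf1def, Real.norm_eq_abs]
        by_cases hω : ω ∈ E
        · rw [Set.indicator_of_mem hω]
          have hX' : (X (p + 1) ω : ℝ) ≤ (m : ℝ) := by exact_mod_cast hXleE ω hω
          have hX0 : (0 : ℝ) ≤ (X (p + 1) ω : ℝ) := by positivity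
          rw [abs_of_nonneg (mul_nonneg (hc0 ω) hX0)]
          calc c ω * (X (p + 1) ω : ℝ) ≤ 1 * (m : ℝ) :=
            mul_le_mul (hc1 ω) hX' hX0 zero_le_one
          _ = m := one_mul _
        · rw [Set.indicator_of_notMem hω]; simp
      have hf2b : ∀ ω, ‖f2 ω‖ ≤ m := by
        intro ω
        rw [hf2def, Real.norm_eq_abs]
        by_cases hω : ω ∈ E
        · rw [Set.indicator_of_mem hω]
          have hZ0 := hrruZ_nonneg (a := a) (b := b) (N := N) (X := X) (R := R) p ω
          have hZ1 := hrruZ_le_one (a := a) (b := b) (N := N) (X := X) (R := R) h.ha h.rangeX p ω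
          have hm0' : (0 : ℝ) ≤ (m : ℝ) := by positivity
          rw [abs_of_nonneg (mul_nonneg (hc0 ω) (mul_nonneg hm0' hZ0))]
          calc c ω * ((m : ℝ) * hrruZ a b N X R p ω) ≤ 1 * ((m : ℝ) * 1) := by
                apply mul_le_mul (hc1 ω) _ (mul_nonneg hm0' hZ0) zero_le_one
                exact mul_le_mul_of_nonneg_left hZ1 hm0'
          _ = m := by ring
        · rw [Set.indicator_of_notMem hω]; simp
      have hf1int : Integrable f1 μ := integrable_of_bound hf1m m hf1b
      have hf2int : Integrable f2 μ := integrable_of_bound hf2m m hf2b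
      have hψeq : ψ = fun ω => f1 ω - f2 ω := by
        funext ω
        by_cases hω : ω ∈ E
        · rw [hψdef, Set.indicator_of_mem hω, hf1def, hf2def, Set.indicator_of_mem hω,
            Set.indicator_of_mem hω, hφdef]
          simp only
          ring
        · rw [hψdef, Set.indicator_of_notMem hω, hf1def, hf2def,
            Set.indicator_of_notMem hω, Set.indicator_of_notMem hω, sub_self]
      rw [hψeq, integral_sub hf1int hf2int, sub_eq_zero]
      -- the auxiliary functions g, fk, pmfk
      set g : Ω → ℝ := E.indicator c with hgdef
      have hgG : Measurable[hrruG N X R p] g := hcG.indicator hEG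
      have hgm0 : Measurable g := hgG.mono hmG le_rfl
      have hg0 : ∀ ω, 0 ≤ g ω := by
        intro ω
        rw [hgdef]
        by_cases hω : ω ∈ E
        · rw [Set.indicator_of_mem hω]; exact hc0 ω
        · rw [Set.indicator_of_notMem hω]
      have hg1 : ∀ ω, g ω ≤ 1 := by
        intro ω
        rw [hgdef]
        by_cases hω : ω ∈ E
        · rw [Set.indicator_of_mem hω]; exact hc1 ω
        · rw [Set.indicator_of_notMem hω]; exact zero_le_one
      set fk : ℕ → Ω → ℝ := fun k ω => if X (p + 1) ω = k then (1 : ℝ) else 0 with hfkdef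
      set pmfk : ℕ → Ω → ℝ := fun k ω =>
        hypergeomPMF (N (p + 1) ω) (hrruS a b N R p ω) (hrruHa a X R p ω) k with hpmfkdef
      have hfkm : ∀ k, Measurable (fk k) := fun k =>
        Measurable.ite (h.measX (p + 1) (measurableSet_singleton k))
          measurable_const measurable_const
      have hfkb : ∀ k ω, ‖fk k ω‖ ≤ 1 := by
        intro k ω
        rw [hfkdef]
        by_cases hx : X (p + 1) ω = k <;> simp [hx]
      have hfkint : ∀ k, Integrable (fk k) μ := fun k =>
        integrable_of_bound (hfkm k) 1 (hfkb k)
      have hpmfkm : ∀ k, Measurable (pmfk k) := by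
        intro k
        have : pmfk k = (fun t : ℕ × ℕ × ℕ => hypergeomPMF t.1 t.2.1 t.2.2 k) ∘
            (fun ω => (N (p + 1) ω, hrruS a b N R p ω, hrruHa a X R p ω)) := rfl
        rw [this]
        exact Measurable.of_discrete.comp
          ((h.measN (p + 1)).prodMk
            (((measurable_S_F p).mono hmF le_rfl).prodMk
              ((measurable_Ha_F p).mono hmF le_rfl)))
      -- on E the relevant parameters
      have hNSE : ∀ ω ∈ E, m ≤ hrruS a b N R p ω := by
        intro ω hω
        have hNm : N (p + 1) ω = m := hω.2
        have := (h.rangeN (p + 1) (by omega) ω).2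
        simp only [Nat.add_sub_cancel] at this
        omega
      -- pointwise identities
      have hpt1 : ∀ ω, f1 ω = ∑ k ∈ Finset.range (m + 1), (k : ℝ) * (g ω * fk k ω) := by
        intro ω
        by_cases hω : ω ∈ E
        · rw [hf1def, Set.indicator_of_mem hω, hgdef]
          simp only [Set.indicator_of_mem hω, hfkdef]
          have hXm : X (p + 1) ω ∈ Finset.range (m + 1) :=
            Finset.mem_range.mpr (by have := hXleE ω hω; omega)
          have : ∀ k ∈ Finset.range (m + 1),
              (k : ℝ) * (c ω * if X (p + 1) ω = k then (1 : ℝ) else 0)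
              = if X (p + 1) ω = k then (k : ℝ) * c ω else 0 := by
            intro k _
            by_cases hx : X (p + 1) ω = k <;> simp [hx]
          rw [Finset.sum_congr rfl this, Finset.sum_ite_eq, if_pos hXm]
          ring
        · rw [hf1def, Set.indicator_of_notMem hω, hgdef]
          simp only [Set.indicator_of_notMem hω, zero_mul, mul_zero,
            Finset.sum_const_zero]
      have hpt2 : ∀ ω, f2 ω
          = g ω * ∑ k ∈ Finset.range (m + 1), (k : ℝ) * pmfk k ω := by
        intro ω
        by_cases hω : ω ∈ E
        · have hNm : N (p + 1) ω = m := hω.2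
          rw [hf2def, Set.indicator_of_mem hω, hgdef]
          simp only [Set.indicator_of_mem hω, hpmfkdef, hNm]
          rw [hyper_mean m _ _ hm1 (hNSE ω hω) (hrruHa_le h.rangeX p ω)]
          rw [hrruZ]
          ring
        · rw [hf2def, Set.indicator_of_notMem hω, hgdef]
          simp only [Set.indicator_of_notMem hω, zero_mul]
      -- integrability of summands
      have hgfk_int : ∀ k, Integrable (fun ω => g ω * fk k ω) μ := by
        intro k
        apply integrable_of_bound (hgm0.mul (hfkm k)) 1
        intro ω
        rw [Real.norm_eq_abs, Pi.mul_apply, abs_mul]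
        calc |g ω| * |fk k ω| ≤ 1 * 1 := by
              apply mul_le_mul _ (hfkb k ω) (abs_nonneg _) zero_le_one
              rw [abs_of_nonneg (hg0 ω)]; exact hg1 ω
        _ = 1 := one_mul 1
      have hpmfk_bd : ∀ k ∈ Finset.range (m + 1), ∀ ω, ‖g ω * pmfk k ω‖ ≤ 1 := by
        intro k hk ω
        rw [Real.norm_eq_abs, abs_mul]
        by_cases hω : ω ∈ E
        · have hNm : N (p + 1) ω = m := hω.2
          have hb : pmfk k ω ≤ 1 := by
            rw [hpmfkdef]
            simp only [hNm]
            exact hyper_le_one (by have := Finset.mem_range.mp hk; omega)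
              (hNSE ω hω) (hrruHa_le h.rangeX p ω)
          calc |g ω| * |pmfk k ω| ≤ 1 * 1 := by
                apply mul_le_mul _ _ (abs_nonneg _) zero_le_one
                · rw [abs_of_nonneg (hg0 ω)]; exact hg1 ω
                · rw [abs_of_nonneg (hyper_nonneg _ _ _ _)]; exact hb
          _ = 1 := one_mul 1
        · rw [hgdef, Set.indicator_of_notMem hω]
          simp
      have hgpmfk_int : ∀ k ∈ Finset.range (m + 1),
          Integrable (fun ω => g ω * pmfk k ω) μ := fun k hk =>
        integrable_of_bound (hgm0.mul (hpmfkm k)) 1 (hpmfk_bd k hk)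
      -- conditional expectation computation for each k
      haveI : SigmaFinite (μ.trim hmG) := by infer_instance
      have hcondk : ∀ k, ∫ ω, g ω * fk k ω ∂μ = ∫ ω, g ω * pmfk k ω ∂μ := by
        intro k
        have hgSM : StronglyMeasurable[hrruG N X R p] g := hgG.stronglyMeasurable
        have hgfk : Integrable (g * fk k) μ := hgfk_int k
        have hpull := condExp_mul_of_stronglyMeasurable_left hgSM hgfk (hfkint k)
        have hhyp := h.hypergeom (p + 1) (by omega) k
        simp only [Nat.add_sub_cancel] at hhyp
        calc ∫ ω, g ω * fk k ω ∂μ = ∫ ω, (g * fk k) ω ∂μ := rfl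
          _ = ∫ ω, (μ[g * fk k|hrruG N X R p]) ω ∂μ := (integral_condExp hmG).symm
          _ = ∫ ω, (g * μ[fk k|hrruG N X R p]) ω ∂μ := integral_congr_ae hpull
          _ = ∫ ω, g ω * pmfk k ω ∂μ := by
              apply integral_congr_ae
              have : μ[fk k|hrruG N X R p] =ᵐ[μ] pmfk k := hhyp
              filter_upwards [this] with ω hω
              simp only [Pi.mul_apply, hω]
      -- putting everything together
      calc ∫ ω, f1 ω ∂μ
          = ∫ ω, ∑ k ∈ Finset.range (m + 1), (k : ℝ) * (g ω * fk k ω) ∂μ := by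
            apply integral_congr_ae
            exact ae_of_all _ hpt1
        _ = ∑ k ∈ Finset.range (m + 1), ∫ ω, (k : ℝ) * (g ω * fk k ω) ∂μ :=
            integral_finset_sum _ (fun k _ => ((hgfk_int k).const_mul _))
        _ = ∑ k ∈ Finset.range (m + 1), (k : ℝ) * ∫ ω, g ω * fk k ω ∂μ := by
            apply Finset.sum_congr rfl
            intro k _
            exact integral_const_mul _ _
        _ = ∑ k ∈ Finset.range (m + 1), (k : ℝ) * ∫ ω, g ω * pmfk k ω ∂μ := by
            apply Finset.sum_congr rfl
            intro k _
            rw [hcondk k]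
        _ = ∑ k ∈ Finset.range (m + 1), ∫ ω, (k : ℝ) * (g ω * pmfk k ω) ∂μ := by
            apply Finset.sum_congr rfl
            intro k _
            exact (integral_const_mul _ _).symm
        _ = ∫ ω, ∑ k ∈ Finset.range (m + 1), (k : ℝ) * (g ω * pmfk k ω) ∂μ :=
            (integral_finset_sum _ (fun k hk => ((hgpmfk_int k hk).const_mul _))).symm
        _ = ∫ ω, f2 ω ∂μ := by
            apply integral_congr_ae
            apply ae_of_all
            intro ω
            rw [hpt2 ω, Finset.mul_sum]
            apply Finset.sum_congr rfl
            intro k _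
            ring
    simp only [hzero, tsum_zero]
  -- conclude via uniqueness of conditional expectation
  haveI : SigmaFinite (μ.trim hmH) := by infer_instance
  have hcond0 : μ[D|hrruHfilt N X R p] =ᵐ[μ] 0 := by
    have h0 := ae_eq_condExp_of_forall_setIntegral_eq hmH hDint
      (fun s _ _ => (integrable_zero _ _ _).integrableOn)
      (fun s hs _ => by
        rw [key s hs]
        simp)
      (StronglyMeasurable.aestronglyMeasurable stronglyMeasurable_const)
    exact h0.symm
  have hsplit : hrruZ a b N X R (p + 1) = fun ω => hrruZ a b N X R p ω + D ω := by
    funext ω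
    rw [hDdef]
    simp
  rw [hsplit]
  calc μ[fun ω => hrruZ a b N X R p ω + D ω|hrruHfilt N X R p]
      =ᵐ[μ] μ[hrruZ a b N X R p|hrruHfilt N X R p] + μ[D|hrruHfilt N X R p] :=
        condExp_add (hZint p) hDint _
    _ =ᵐ[μ] hrruZ a b N X R p + 0 := by
        apply EventuallyEq.add _ hcond0
        rw [condExp_of_stronglyMeasurable hmH (part2 p) (hZint p)]
    _ = hrruZ a b N X R p := by simp
end
end
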